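/- Let L and A be Hermitian n×n matrices and f, g real-valued functions on a set D containing the spectrum of A. If f(x) ≤ g(x) for all x ∈ D (or f(x) ≥ g(x) for all x ∈ D), then Tr[f(A) L g(A) L] ≤ (1/2) Tr[(f(A)L)² + (g(A)L)²]. -/

import Mathlib

open Matrix in
/-- multiplicativity of the explicit Hermitian cfc -/
lemma cfc_mul_cfc' {n : ℕ} {A : Matrix (Fin n) (Fin n) ℂ} (hA : A.IsHermitian)
    (f g : ℝ → ℝ) : hA.cfc f * hA.cfc g = hA.cfc (fun x => f x * g x) := by
  unfold Matrix.IsHermitian.cfc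
  simp only [Unitary.conjStarAlgAut_apply, Unitary.coe_star]
  have h : ∀ {a b c d e f : Matrix (Fin n) (Fin n) ℂ},
      (a * b * c) * (d * e * f) = a * (b * (c * d) * e) * f := by
    intros; simp only [mul_assoc]
  rw [h]
  simp only [SetLike.coe_mem, Unitary.star_mul_self_of_mem, mul_one, diagonal_mul_diagonal]
  have : (fun i => (RCLike.ofReal ∘ f ∘ hA.eigenvalues) i * (RCLike.ofReal ∘ g ∘ hA.eigenvalues) i)
      = (RCLike.ofReal ∘ (fun x => f x * g x) ∘ hA.eigenvalues : Fin n → ℂ) :=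
    funext fun i => by simp
  rw [this]

open Matrix in
lemma cfc_congr' {n : ℕ} {A : Matrix (Fin n) (Fin n) ℂ} (hA : A.IsHermitian)
    (f g : ℝ → ℝ) (h : ∀ i, f (hA.eigenvalues i) = g (hA.eigenvalues i)) :
    hA.cfc f = hA.cfc g := by
  unfold Matrix.IsHermitian.cfc
  have : (RCLike.ofReal ∘ f ∘ hA.eigenvalues : Fin n → ℂ)
      = (RCLike.ofReal ∘ g ∘ hA.eigenvalues : Fin n → ℂ) :=
    funext fun i => by simp [h i]
  rw [this]

open Matrix in
lemma cfc_sub' {n : ℕ} {A : Matrix (Fin n) (Fin n) ℂ} (hA : A.IsHermitian)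
    (f g : ℝ → ℝ) : hA.cfc f - hA.cfc g = hA.cfc (fun x => f x - g x) := by
  unfold Matrix.IsHermitian.cfc
  simp only [Unitary.conjStarAlgAut_apply, Unitary.coe_star]
  have : (RCLike.ofReal ∘ (fun x => f x - g x) ∘ hA.eigenvalues : Fin n → ℂ)
      = fun i => (RCLike.ofReal ∘ f ∘ hA.eigenvalues : Fin n → ℂ) i
        - (RCLike.ofReal ∘ g ∘ hA.eigenvalues : Fin n → ℂ) i :=
    funext fun i => by simp
  rw [this, ← diagonal_sub, mul_sub, sub_mul]

open Matrix in
lemma cfc_neg'' {n : ℕ} {A : Matrix (Fin n) (Fin n) ℂ} (hA : A.IsHermitian)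
    (f : ℝ → ℝ) : hA.cfc (fun x => -f x) = -hA.cfc f := by
  unfold Matrix.IsHermitian.cfc
  simp only [Unitary.conjStarAlgAut_apply, Unitary.coe_star]
  have : (RCLike.ofReal ∘ (fun x => -f x) ∘ hA.eigenvalues : Fin n → ℂ)
      = fun i => -(RCLike.ofReal ∘ f ∘ hA.eigenvalues : Fin n → ℂ) i :=
    funext fun i => by simp
  rw [this, ← diagonal_neg, mul_neg, neg_mul]

open Matrix in
lemma cfc_hermitian' {n : ℕ} {A : Matrix (Fin n) (Fin n) ℂ} (hA : A.IsHermitian)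
    (f : ℝ → ℝ) : (hA.cfc f).IsHermitian := by
  unfold Matrix.IsHermitian.cfc
  simp only [Unitary.conjStarAlgAut_apply, Unitary.coe_star]
  rw [Matrix.IsHermitian, conjTranspose_mul, conjTranspose_mul, diagonal_conjTranspose,
    ← star_eq_conjTranspose, ← star_eq_conjTranspose, star_star, mul_assoc]
  have : star (RCLike.ofReal ∘ f ∘ hA.eigenvalues : Fin n → ℂ)
      = RCLike.ofReal ∘ f ∘ hA.eigenvalues :=
    funext fun i => by simp [Pi.star_apply, Complex.conj_ofReal]
  rw [this]

open Matrix ComplexOrder in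
lemma trace_conjTranspose_mul_self_nonneg' {n : ℕ} (M : Matrix (Fin n) (Fin n) ℂ) :
    0 ≤ trace (Mᴴ * M) := by
  rw [Matrix.trace]
  refine Finset.sum_nonneg fun i _ => ?_
  rw [Matrix.diag_apply, Matrix.mul_apply]
  exact Finset.sum_nonneg fun j _ => by
    simpa [Matrix.conjTranspose_apply] using star_mul_self_nonneg (M j i)

set_option maxHeartbeats 1000000 in
open Matrix ComplexOrder in
lemma key_nonneg' {n : ℕ} (L A : Matrix (Fin n) (Fin n) ℂ)
    (hL : L.IsHermitian) (hA : A.IsHermitian) (d : ℝ → ℝ)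
    (hd : ∀ i, 0 ≤ d (hA.eigenvalues i)) :
    0 ≤ trace (hA.cfc d * L * (hA.cfc d * L)) := by
  set B := hA.cfc (fun x => Real.sqrt (d x)) with hB
  have hBB : hA.cfc d = B * B := by
    rw [hB, cfc_mul_cfc']
    exact cfc_congr' hA _ _ fun i => (Real.mul_self_sqrt (hd i)).symm
  rw [hBB]
  have hherm : (B * L * B)ᴴ = B * L * B := by
    rw [conjTranspose_mul, conjTranspose_mul, (cfc_hermitian' hA _ : Bᴴ = B), hL.eq]
    simp [mul_assoc]
    rfl
  calc (0 : ℂ) ≤ trace ((B * L * B)ᴴ * (B * L * B)) :=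
        trace_conjTranspose_mul_self_nonneg' _
    _ = trace ((B * L * B * B * L) * B) := by
        rw [hherm]; simp only [mul_assoc]
    _ = trace (B * (B * L * B * B * L)) := trace_mul_comm _ _
    _ = trace (B * B * L * (B * B * L)) := by simp only [mul_assoc]

open Matrix ComplexOrder in
theorem trace_fALgAL_le_of_le_or_ge {n : ℕ} (L A : Matrix (Fin n) (Fin n) ℂ)
    (hL : L.IsHermitian) (hA : A.IsHermitian) (D : Set ℝ) (f g : ℝ → ℝ)
    (hspec : ∀ i, hA.eigenvalues i ∈ D)
    (hfg : (∀ x ∈ D, f x ≤ g x) ∨ (∀ x ∈ D, g x ≤ f x)) :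
    trace (hA.cfc f * L * hA.cfc g * L) ≤
      (1 / 2 : ℂ) * trace ((hA.cfc f * L) ^ 2 + (hA.cfc g * L) ^ 2) := by
  set F := hA.cfc f with hF
  set G := hA.cfc g with hG
  have key : 0 ≤ trace ((F - G) * L * ((F - G) * L)) := by
    obtain hc | hc := hfg
    · -- f ≤ g on D : F - G = -(cfc (g - f))
      have hFG : F - G = -hA.cfc (fun x => g x - f x) := by
        rw [hF, hG, cfc_sub' hA f g, ← cfc_neg'']
        exact cfc_congr' hA _ _ fun i => by ring
      rw [hFG, neg_mul, neg_mul, mul_neg, neg_neg]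
      exact key_nonneg' L A hL hA _ fun i => sub_nonneg.mpr (hc _ (hspec i))
    · have hFG : F - G = hA.cfc (fun x => f x - g x) := cfc_sub' hA f g
      rw [hFG]
      exact key_nonneg' L A hL hA _ fun i => sub_nonneg.mpr (hc _ (hspec i))
  have expand : trace ((F - G) * L * ((F - G) * L))
      = trace ((F * L) ^ 2) + trace ((G * L) ^ 2) - 2 * trace (F * L * G * L) := by
    have hcomm : trace (G * L * (F * L)) = trace (F * L * (G * L)) := trace_mul_comm _ _
    simp only [sub_mul, mul_sub, sq]
    rw [trace_sub, trace_sub, trace_sub, hcomm]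
    rw [show F * L * (G * L) = F * L * G * L by simp [mul_assoc]]
    ring
  rw [expand] at key
  rw [trace_add, Complex.le_def]
  rw [Complex.nonneg_iff] at key
  simp only [Complex.sub_re, Complex.add_re, Complex.mul_re, Complex.sub_im, Complex.add_im,
    Complex.mul_im, Complex.zero_re, Complex.zero_im] at key ⊢
  norm_num at key ⊢
  obtain ⟨k1, k2⟩ := key
  constructor
  · linarith
  · linarith
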